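/- The functor F : G(X)-Rep → M(X) defined by P^ρ(m) = (1/|K|) Σ_{χ∈K*} χ(m) ρ(χ, I) (for m ∈ K, zero otherwise) and Q^ρ(g) = ρ(1, Ig) is a strict tensor functor: it sends the trivial representation to the tensor unit of M(X), and satisfies P^{ρ₁⊗ρ₂}(m) = Σ_{n} P^{ρ₁}(n) ⊗ P^{ρ₂}(n⁻¹m) and the analogous identity for Q. -/

import Mathlib

/-- A crossed module: groups `X₁`, `X₂`, a right action of `X₁` on `X₂` by group
automorphisms (written `act m g` for `m^g`), and a boundary homomorphism
`δ : X₂ →* X₁` satisfying equivariance and the Peiffer identity. -/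
structure CrossedModule (X₁ X₂ : Type) [Group X₁] [Group X₂] where
  act : X₂ → X₁ → X₂
  act_one : ∀ m : X₂, act m 1 = m
  act_mul : ∀ (m : X₂) (g h : X₁), act m (g * h) = act (act m g) h
  act_hom : ∀ (m n : X₂) (g : X₁), act (m * n) g = act m g * act n g
  δ : X₂ →* X₁
  equivariance : ∀ (m : X₂) (g : X₁), δ (act m g) = g⁻¹ * δ m * g
  peiffer : ∀ m n : X₂, act m (δ n) = n⁻¹ * m * n

section Representations
open TensorProduct

variable {F : Type} [Field F] {X₁ X₂ : Type} [Group X₁] [Group X₂] [Fintype X₁] [Fintype X₂] [DecidableEq X₂]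

/-- A representation of the crossed module `X` on the `F`-vector space `V`:
an `X₂`-grading, encoded by the family of projections `P m` onto the graded
components, together with an `X₁`-action `Q` such that `P(m)Q(g) = Q(g)P(m^g)`.
These are the objects of the category `M(X)`. -/
structure XRep (F : Type) [Field F] {X₁ X₂ : Type} [Group X₁] [Group X₂] [Fintype X₂] [DecidableEq X₂]
    (X : CrossedModule X₁ X₂)
    (V : Type) [AddCommGroup V] [Module F V] where
  P : X₂ → (V →ₗ[F] V)
  Q : X₁ → (V →ₗ[F] V)
  P_orth : ∀ m n : X₂, (P m) ∘ₗ (P n) = if m = n then P m else 0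
  P_total : (∑ m : X₂, P m) = LinearMap.id
  Q_one : Q 1 = LinearMap.id
  Q_mul : ∀ g h : X₁, Q (g * h) = Q g ∘ₗ Q h
  PQ_compat : ∀ (m : X₂) (g : X₁), (P m) ∘ₗ (Q g) = (Q g) ∘ₗ (P (X.act m g))

variable {X : CrossedModule X₁ X₂}
variable {U V W U' V' W' : Type}
  [AddCommGroup U] [Module F U] [AddCommGroup V] [Module F V] [AddCommGroup W] [Module F W]
  [AddCommGroup U'] [Module F U'] [AddCommGroup V'] [Module F V'] [AddCommGroup W'] [Module F W']

/-- The grading of the tensor product: `(V ⊗ W)_m = ⊕_{nl = m} V_n ⊗ W_l`. -/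
noncomputable def tensorP (A : XRep F X V) (B : XRep F X W) (m : X₂) :
    (V ⊗[F] W) →ₗ[F] (V ⊗[F] W) :=
  ∑ n : X₂, TensorProduct.map (A.P n) (B.P (n⁻¹ * m))

/-- The diagonal `X₁`-action on the tensor product. -/
noncomputable def tensorQ (A : XRep F X V) (B : XRep F X W) (g : X₁) :
    (V ⊗[F] W) →ₗ[F] (V ⊗[F] W) :=
  TensorProduct.map (A.Q g) (B.Q g)

/-- The braiding `R_{V,W}(v ⊗ w) = ∑_{m ∈ X₂} Q_W(∂m) w ⊗ P_V(m) v`, written in terms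
of the grading data `PA` on `V` and the action data `QB` on `W`. -/
noncomputable def braidAux (X : CrossedModule X₁ X₂)
    (PA : X₂ → (V →ₗ[F] V)) (QB : X₁ → (W →ₗ[F] W)) :
    (V ⊗[F] W) →ₗ[F] (W ⊗[F] V) :=
  ∑ m : X₂, (TensorProduct.map (QB (X.δ m)) (PA m)) ∘ₗ
    (TensorProduct.comm F V W).toLinearMap

/-- The braiding `R_{V,W}` between two crossed-module representations. -/
noncomputable def braid (A : XRep F X V) (B : XRep F X W) :
    (V ⊗[F] W) →ₗ[F] (W ⊗[F] V) :=
  braidAux X A.P B.Q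

/-- Morphisms in `M(X)`: linear maps compatible with the grading and the action. -/
def IsXRepHom (A : XRep F X V) (B : XRep F X W) (f : V →ₗ[F] W) : Prop :=
  (∀ m : X₂, f ∘ₗ A.P m = B.P m ∘ₗ f) ∧ (∀ g : X₁, f ∘ₗ A.Q g = B.Q g ∘ₗ f)

end Representations

section GX

variable {X₁ X₂ : Type} [Group X₁] [Group X₂]

lemma CrossedModule.one_act (X : CrossedModule X₁ X₂) (g : X₁) : X.act 1 g = 1 := by
  have h := X.act_hom 1 1 g
  rw [mul_one] at h
  exact (left_eq_mul.mp h)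

/-- The action of `X₁` on `X₂` preserves `ker ∂`, giving an action on the kernel. -/
def CrossedModule.kerAct (X : CrossedModule X₁ X₂) (k : X.δ.ker) (g : X₁) : X.δ.ker :=
  ⟨X.act (k : X₂) g, by
    have hk : X.δ (k : X₂) = 1 := k.2
    simp [MonoidHom.mem_ker, X.equivariance, hk]⟩

lemma CrossedModule.kerAct_one (X : CrossedModule X₁ X₂) (g : X₁) :
    X.kerAct 1 g = 1 := by
  apply Subtype.ext
  show X.act ((1 : X.δ.ker) : X₂) g = ((1 : X.δ.ker) : X₂)
  simpa using X.one_act g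

lemma CrossedModule.kerAct_mul (X : CrossedModule X₁ X₂) (k k' : X.δ.ker) (g : X₁) :
    X.kerAct (k * k') g = X.kerAct k g * X.kerAct k' g := by
  apply Subtype.ext
  simpa [CrossedModule.kerAct] using X.act_hom (k : X₂) (k' : X₂) g

variable (F : Type) [Field F] (X : CrossedModule X₁ X₂) [X.δ.range.Normal]

/-- The character group `(ker ∂)* = Hom(ker ∂, F^×)` of the abelian group `ker ∂`. -/
abbrev KChar : Type := X.δ.ker →* Fˣ

/-- The cokernel `coker ∂ = X₁ / Im ∂`. -/
abbrev Coker : Type := X₁ ⧸ X.δ.range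

/-- The dual action `μ̂` of `coker ∂` on `(ker ∂)*`: `(χ^c)(k) = χ(k^{c⁻¹})`,
computed via a coset representative. -/
noncomputable def dualActQ (c : Coker X) (χ : KChar F X) : KChar F X where
  toFun k := χ (X.kerAct k (Quotient.out c)⁻¹)
  map_one' := by (try simp only []); rw [X.kerAct_one, map_one]
  map_mul' k k' := by (try simp only []); rw [X.kerAct_mul, map_mul]

variable {V : Type} [AddCommGroup V] [Module F V]

/-- `ρ` is a representation of the group `G(X) = (ker ∂)* ⋊_{μ̂} (coker ∂)` on `V`
(with the semidirect product multiplication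
`(χ, c) · (χ', c') = (χ^{c'} χ', c c')`). -/
def IsGRep (ρ : KChar F X × Coker X → (V →ₗ[F] V)) : Prop :=
  ρ (1, 1) = LinearMap.id ∧
  ∀ (χ χ' : KChar F X) (c c' : Coker X),
    ρ (dualActQ F X c' χ * χ', c * c') = ρ (χ, c) ∘ₗ ρ (χ', c')

variable [Fintype X₂] [DecidableEq X₂]
open Classical in

/-- The grading part of the functor `F : G(X)-Rep → M(X)`:
`P^ρ(m) = (1/|K|) ∑_{χ ∈ K*} χ(m) ρ(χ, I)` for `m ∈ K = ker ∂`, and `0` otherwise. -/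
noncomputable def FobP (ρ : KChar F X × Coker X → (V →ₗ[F] V)) (m : X₂) :
    V →ₗ[F] V :=
  if h : m ∈ X.δ.ker then
    (Nat.card X.δ.ker : F)⁻¹ • ∑ᶠ χ : KChar F X, ((χ ⟨m, h⟩ : Fˣ) : F) • ρ (χ, 1)
  else 0

/-- The action part of the functor `F : G(X)-Rep → M(X)`: `Q^ρ(g) = ρ(1, Ig)`. -/
def FobQ (ρ : KChar F X × Coker X → (V →ₗ[F] V)) (g : X₁) : V →ₗ[F] V :=
  ρ (1, QuotientGroup.mk g)

end GX


section Orth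
variable {F : Type} [Field F] {K : Type} [Group K] [Fintype K]

lemma aux_sum_char_eq_zero {χ : K →* Fˣ} (hχ : χ ≠ 1) :
    ∑ k : K, ((χ k : Fˣ) : F) = 0 := by
  obtain ⟨k₀, hk₀⟩ : ∃ k₀ : K, χ k₀ ≠ 1 := by
    by_contra h
    push_neg at h
    exact hχ (MonoidHom.ext fun k => h k)
  have h1 : ((χ k₀ : Fˣ) : F) * ∑ k : K, ((χ k : Fˣ) : F) = ∑ k : K, ((χ k : Fˣ) : F) := by
    rw [Finset.mul_sum]
    refine Fintype.sum_equiv (Equiv.mulLeft k₀) _ _ fun k => ?_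
    simp [Equiv.mulLeft, map_mul]
  have h2 : (((χ k₀ : Fˣ) : F) - 1) * ∑ k : K, ((χ k : Fˣ) : F) = 0 := by
    rw [sub_mul, one_mul, h1, sub_self]
  have h3 : ((χ k₀ : Fˣ) : F) - 1 ≠ 0 := by
    rw [sub_ne_zero]
    exact fun h => hk₀ (Units.ext (by simpa using h))
  exact (mul_eq_zero.mp h2).resolve_left h3

open Classical in
lemma aux_sum_char_mul_inv (χ ψ : K →* Fˣ) :
    ∑ k : K, ((χ k : Fˣ) : F) * ((ψ k⁻¹ : Fˣ) : F) =
      if χ = ψ then (Fintype.card K : F) else 0 := by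
  have key : ∀ k : K, ((χ k : Fˣ) : F) * ((ψ k⁻¹ : Fˣ) : F) = (((χ * ψ⁻¹) k : Fˣ) : F) := by
    intro k
    simp [map_inv]
  simp_rw [key]
  split_ifs with h
  · subst h
    simp
  · refine aux_sum_char_eq_zero fun hc => h (MonoidHom.ext fun x => ?_)
    have h2 : (χ * ψ⁻¹) x = (1 : K →* Fˣ) x := by rw [hc]
    simp only [MonoidHom.mul_apply, MonoidHom.inv_apply, MonoidHom.one_apply] at h2
    exact mul_inv_eq_one.mp h2

set_option linter.unusedSectionVars false in
lemma aux_sum_dual_eq_zero [Fintype (K →* Fˣ)] {k : K} (hsep : ∃ ψ : K →* Fˣ, ψ k ≠ 1) :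
    ∑ χ : K →* Fˣ, ((χ k : Fˣ) : F) = 0 := by
  obtain ⟨ψ, hψ⟩ := hsep
  have h1 : ((ψ k : Fˣ) : F) * ∑ χ : K →* Fˣ, ((χ k : Fˣ) : F)
      = ∑ χ : K →* Fˣ, ((χ k : Fˣ) : F) := by
    rw [Finset.mul_sum]
    refine Fintype.sum_equiv (Equiv.mulLeft ψ) _ _ fun χ => ?_
    simp [Equiv.mulLeft]
  have h2 : (((ψ k : Fˣ) : F) - 1) * ∑ χ : K →* Fˣ, ((χ k : Fˣ) : F) = 0 := by
    rw [sub_mul, one_mul, h1, sub_self]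
  have h3 : ((ψ k : Fˣ) : F) - 1 ≠ 0 := by
    rw [sub_ne_zero]
    exact fun h => hψ (Units.ext (by simpa using h))
  exact (mul_eq_zero.mp h2).resolve_left h3

end Orth

section MoreAux

open Classical in
lemma aux_bilin_orth {F K M : Type} [Field F] [Group K] [Fintype K]
    [Fintype (K →* Fˣ)] [AddCommGroup M] [Module F M]
    (Phi : (K →* Fˣ) → (K →* Fˣ) → M) (k : K) :
    (∑ n : K, ∑ χ : K →* Fˣ, ∑ ψ : K →* Fˣ,
        (((χ n : Fˣ) : F) * ((ψ (n⁻¹ * k) : Fˣ) : F)) • Phi χ ψ)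
      = (Fintype.card K : F) • ∑ χ : K →* Fˣ, ((χ k : Fˣ) : F) • Phi χ χ := by
  rw [Finset.sum_comm]
  have step1 : ∀ χ : K →* Fˣ,
      (∑ n : K, ∑ ψ : K →* Fˣ, (((χ n : Fˣ) : F) * ((ψ (n⁻¹ * k) : Fˣ) : F)) • Phi χ ψ)
        = ∑ ψ : K →* Fˣ, ((if χ = ψ then (Fintype.card K : F) else 0) * ((ψ k : Fˣ) : F)) • Phi χ ψ := by
    intro χ
    rw [Finset.sum_comm]
    refine Finset.sum_congr rfl fun ψ _ => ?_
    rw [← Finset.sum_smul, ← aux_sum_char_mul_inv χ ψ, Finset.sum_mul]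
    congr 1
    refine Finset.sum_congr rfl fun n _ => ?_
    rw [map_mul, Units.val_mul]
    ring
  simp_rw [step1]
  have step2 : ∀ χ : K →* Fˣ,
      (∑ ψ : K →* Fˣ, ((if χ = ψ then (Fintype.card K : F) else 0) * ((ψ k : Fˣ) : F)) • Phi χ ψ)
        = ((Fintype.card K : F) * ((χ k : Fˣ) : F)) • Phi χ χ := by
    intro χ
    rw [Finset.sum_eq_single χ]
    · rw [if_pos rfl]
    · intro ψ _ hne
      rw [if_neg (Ne.symm hne), zero_mul, zero_smul]
    · intro h
      exact absurd (Finset.mem_univ χ) h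
  simp_rw [step2, mul_smul, ← Finset.smul_sum]

lemma aux_map_expand {F V W : Type} [Field F] [AddCommGroup V] [Module F V]
    [AddCommGroup W] [Module F W] {ι κ : Type} [Fintype ι] [Fintype κ]
    (a : F) (c : ι → F) (d : κ → F) (A : ι → V →ₗ[F] V) (B : κ → W →ₗ[F] W) :
    TensorProduct.map (a • ∑ i : ι, c i • A i) (a • ∑ j : κ, d j • B j)
      = ∑ i : ι, ∑ j : κ, ((a * a) * (c i * d j)) • TensorProduct.map (A i) (B j) := by
  simp only [← TensorProduct.mapBilinear_apply, map_smul, map_sum, LinearMap.smul_apply,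
    LinearMap.sum_apply, Finset.smul_sum, smul_smul]
  rw [Finset.sum_comm]
  refine Finset.sum_congr rfl fun i _ => Finset.sum_congr rfl fun j _ => ?_
  congr 1
  ring

/-- `ker δ` is an abelian group, by the Peiffer identity. -/
def kerCommGroup {X₁ X₂ : Type} [Group X₁] [Group X₂] (X : CrossedModule X₁ X₂) :
    CommGroup X.δ.ker :=
  { (inferInstance : Group X.δ.ker) with
    mul_comm := fun a b => Subtype.ext (by
      have hp := X.peiffer (a : X₂) (b : X₂)
      rw [show X.δ (b : X₂) = 1 from b.2, X.act_one] at hp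
      show (a : X₂) * b = (b : X₂) * a
      conv_rhs => rw [hp]
      group) }

end MoreAux

open TensorProduct in
/-- The functor `F : G(X)-Rep → M(X)` is a strict tensor functor: it sends the
trivial representation to the tensor unit of `M(X)`, and on a tensor product of
representations `P^{ρ₁ ⊗ ρ₂}(m) = ∑_n P^{ρ₁}(n) ⊗ P^{ρ₂}(n⁻¹m)` and
`Q^{ρ₁ ⊗ ρ₂}(g) = Q^{ρ₁}(g) ⊗ Q^{ρ₂}(g)`. -/
theorem functor_F_tensor {F : Type} [Field F] [IsAlgClosed F] [CharZero F]
    {X₁ X₂ : Type} [Group X₁] [Group X₂] [Fintype X₁] [Fintype X₂] [DecidableEq X₂]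
    (X : CrossedModule X₁ X₂) [X.δ.range.Normal]
    {V W : Type} [AddCommGroup V] [Module F V] [FiniteDimensional F V]
    [AddCommGroup W] [Module F W] [FiniteDimensional F W]
    (ρ₁ : KChar F X × Coker X → (V →ₗ[F] V)) (h₁ : IsGRep F X ρ₁)
    (ρ₂ : KChar F X × Coker X → (W →ₗ[F] W)) (h₂ : IsGRep F X ρ₂) :
    -- the trivial representation is sent to the tensor unit
    (∀ m : X₂, FobP F X (fun _ => (LinearMap.id : F →ₗ[F] F)) m =
      if m = 1 then LinearMap.id else 0) ∧
    (∀ g : X₁, FobQ F X (fun _ => (LinearMap.id : F →ₗ[F] F)) g = LinearMap.id) ∧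
    -- compatibility with tensor products
    (∀ m : X₂, FobP F X (fun p => TensorProduct.map (ρ₁ p) (ρ₂ p)) m =
      ∑ n : X₂, TensorProduct.map (FobP F X ρ₁ n) (FobP F X ρ₂ (n⁻¹ * m))) ∧
    (∀ g : X₁, FobQ F X (fun p => TensorProduct.map (ρ₁ p) (ρ₂ p)) g =
      TensorProduct.map (FobQ F X ρ₁ g) (FobQ F X ρ₂ g)) := by
  classical
  letI : CommGroup X.δ.ker := kerCommGroup X
  haveI : NeZero ((Monoid.exponent X.δ.ker : ℕ) : F) :=
    ⟨Nat.cast_ne_zero.mpr Monoid.exponent_ne_zero_of_finite⟩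
  obtain ⟨e⟩ := CommGroup.monoidHom_mulEquiv_of_hasEnoughRootsOfUnity X.δ.ker F
  haveI hft : Fintype (KChar F X) := Fintype.ofEquiv _ (EquivLike.toEquiv e).symm
  have hcard : (Fintype.card (KChar F X) : ℕ) = Nat.card X.δ.ker := by
    rw [← Nat.card_eq_fintype_card]
    exact Nat.card_congr (EquivLike.toEquiv e)
  have hKcard : (Nat.card X.δ.ker : ℕ) = Fintype.card X.δ.ker := Nat.card_eq_fintype_card
  have hN0 : (Nat.card X.δ.ker : F) ≠ 0 := Nat.cast_ne_zero.mpr Nat.card_pos.ne'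
  refine ⟨?_, fun g => rfl, ?_, fun g => rfl⟩
  · -- trivial representation
    intro m
    by_cases hm : m ∈ X.δ.ker
    · simp only [FobP]
      rw [dif_pos hm, finsum_eq_sum_of_fintype]
      by_cases h1 : m = 1
      · subst h1
        rw [if_pos rfl]
        have hone : ∀ χ : KChar F X,
            ((χ ⟨(1 : X₂), hm⟩ : Fˣ) : F) • (LinearMap.id : F →ₗ[F] F) = LinearMap.id := by
          intro χ
          rw [show (⟨(1 : X₂), hm⟩ : X.δ.ker) = 1 from rfl, map_one, Units.val_one, one_smul]
        have hsum : (∑ χ : KChar F X, ((χ ⟨(1 : X₂), hm⟩ : Fˣ) : F) • (LinearMap.id : F →ₗ[F] F))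
            = ∑ _χ : KChar F X, (LinearMap.id : F →ₗ[F] F) :=
          Finset.sum_congr rfl fun χ _ => hone χ
        rw [hsum, Finset.sum_const, Finset.card_univ, ← Nat.cast_smul_eq_nsmul F, smul_smul,
          hcard, inv_mul_cancel₀ hN0, one_smul]
      · rw [if_neg h1]
        have hk1 : (⟨m, hm⟩ : X.δ.ker) ≠ 1 := fun h => h1 (congrArg Subtype.val h)
        have hsep : ∃ ψ : KChar F X, ψ (⟨m, hm⟩ : X.δ.ker) ≠ 1 :=
          CommGroup.exists_apply_ne_one_of_hasEnoughRootsOfUnity X.δ.ker F hk1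
        rw [← Finset.sum_smul, aux_sum_dual_eq_zero hsep, zero_smul, smul_zero]
    · have h1 : m ≠ 1 := fun h => hm (h ▸ X.δ.ker.one_mem)
      simp only [FobP]
      rw [dif_neg hm, if_neg h1]
  · -- tensor product compatibility for P
    intro m
    by_cases hm : m ∈ X.δ.ker
    · have hterm : ∀ n : X.δ.ker,
          TensorProduct.map (FobP F X ρ₁ ↑n) (FobP F X ρ₂ ((↑n)⁻¹ * m))
            = ∑ χ : KChar F X, ∑ ψ : KChar F X,
                (((Nat.card X.δ.ker : F)⁻¹ * (Nat.card X.δ.ker : F)⁻¹) *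
                  (((χ n : Fˣ) : F) * ((ψ (n⁻¹ * ⟨m, hm⟩) : Fˣ) : F))) •
                TensorProduct.map (ρ₁ (χ, 1)) (ρ₂ (ψ, 1)) := by
        intro n
        have hmem : (↑n)⁻¹ * m ∈ X.δ.ker := mul_mem (inv_mem n.2) hm
        simp only [FobP]
        rw [dif_pos n.2, dif_pos hmem, finsum_eq_sum_of_fintype, finsum_eq_sum_of_fintype]
        have harg : (⟨(↑n)⁻¹ * m, hmem⟩ : X.δ.ker) = n⁻¹ * ⟨m, hm⟩ := rfl
        rw [harg]
        exact aux_map_expand _ _ _ _ _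
      have hzero : ∀ n : X₂, n ∉ X.δ.ker →
          TensorProduct.map (FobP F X ρ₁ n) (FobP F X ρ₂ (n⁻¹ * m)) = 0 := by
        intro n hn
        have h0 : FobP F X ρ₁ n = 0 := by simp only [FobP]; rw [dif_neg hn]
        rw [h0, TensorProduct.map_zero_left]
      have hstep1 : (∑ n : X₂, TensorProduct.map (FobP F X ρ₁ n) (FobP F X ρ₂ (n⁻¹ * m)))
          = ∑ n : X.δ.ker, TensorProduct.map (FobP F X ρ₁ ↑n) (FobP F X ρ₂ ((↑n)⁻¹ * m)) := by
        rw [← Finset.sum_filter_of_ne (p := fun n => n ∈ X.δ.ker)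
          (fun n _ h => by by_contra hn; exact h (hzero n hn))]
        exact Finset.sum_subtype _ (fun x => by simp) _
      conv_lhs => simp only [FobP]
      rw [dif_pos hm, finsum_eq_sum_of_fintype, hstep1]
      simp_rw [hterm,
        mul_smul ((Nat.card X.δ.ker : F)⁻¹ * (Nat.card X.δ.ker : F)⁻¹), ← Finset.smul_sum]
      rw [aux_bilin_orth, smul_smul]
      congr 1
      rw [← hKcard]
      field_simp
    · conv_lhs => simp only [FobP]
      rw [dif_neg hm]
      symm
      refine Finset.sum_eq_zero fun n _ => ?_
      by_cases hn : n ∈ X.δ.ker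
      · have hm2 : n⁻¹ * m ∉ X.δ.ker := fun h => hm (by
          have h2 := mul_mem hn h
          rwa [mul_inv_cancel_left] at h2)
        have h0 : FobP F X ρ₂ (n⁻¹ * m) = 0 := by simp only [FobP]; rw [dif_neg hm2]
        rw [h0, TensorProduct.map_zero_right]
      · have h0 : FobP F X ρ₁ n = 0 := by simp only [FobP]; rw [dif_neg hn]
        rw [h0, TensorProduct.map_zero_left]
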